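/- Let A, B, C be subspaces of a finite-dimensional vector space U over a field such that A ∩ B = A ∩ C = B ∩ C = 0. Then dim(A + B) = dim A + dim B, and DisCoord(A, B, C) = dim((A + B) ∩ C). -/

import Mathlib

/-- The discoordination of `X` with respect to the family `A`:
`Σ_i (dim A_i − |X ∩ A_i|)`. -/
noncomputable def disCoordX (𝔽 : Type*) [Field 𝔽] {U : Type*} [AddCommGroup U]
    [Module 𝔽 U] {m : ℕ} (X : Set U) (A : Fin m → Submodule 𝔽 U) : ℕ :=
  ∑ i, (Module.finrank 𝔽 ↥(A i) - (X ∩ (A i : Set U)).ncard)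

/-- The discoordination of the family `A₁, …, A_m`: the minimum of
`disCoordX` over all linearly independent subsets `X` of the ambient space. -/
noncomputable def DisCoord (𝔽 : Type*) [Field 𝔽] {U : Type*} [AddCommGroup U]
    [Module 𝔽 U] {m : ℕ} (A : Fin m → Submodule 𝔽 U) : ℕ :=
  sInf { n : ℕ | ∃ X : Set U, LinearIndependent 𝔽 (fun x : X => (x : U)) ∧
    n = disCoordX 𝔽 X A }

section Aux

open Submodule Module Set

variable {𝔽 U : Type*} [Field 𝔽] [AddCommGroup U] [Module 𝔽 U] [FiniteDimensional 𝔽 U]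

/-- A linearly independent set inside a submodule has at most `finrank W` elements. -/
lemma aux_ncard_le {s : Set U} {W : Submodule 𝔽 U}
    (hs : LinearIndependent 𝔽 ((↑) : s → U)) (hsub : s ⊆ ↑W) :
    s.ncard ≤ Module.finrank 𝔽 W := by
  have hfin : s.Finite := hs.setFinite
  have : Fintype s := hfin.fintype
  have h1 : Module.finrank 𝔽 (span 𝔽 s) = s.toFinset.card := finrank_span_set_eq_card hs
  have h2 : span 𝔽 s ≤ W := span_le.mpr hsub
  calc s.ncard = s.toFinset.card := Set.ncard_eq_toFinset_card' s
    _ = Module.finrank 𝔽 (span 𝔽 s) := h1.symm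
    _ ≤ Module.finrank 𝔽 W := Submodule.finrank_mono h2

/-- Every submodule has a "basis set": a linearly independent subset spanning it,
of cardinality its finrank. -/
lemma aux_exists_basis (W : Submodule 𝔽 U) :
    ∃ s : Set U, s ⊆ ↑W ∧ LinearIndependent 𝔽 ((↑) : s → U) ∧ span 𝔽 s = W ∧
      s.ncard = Module.finrank 𝔽 W := by
  obtain ⟨s, hsub, hspan, hli⟩ := exists_linearIndependent 𝔽 (W : Set U)
  rw [Submodule.span_eq] at hspan
  have hfin : s.Finite := hli.setFinite
  have : Fintype s := hfin.fintype
  have h1 : Module.finrank 𝔽 (span 𝔽 s) = s.toFinset.card := finrank_span_set_eq_card hli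
  refine ⟨s, hsub, hli, hspan, ?_⟩
  rw [Set.ncard_eq_toFinset_card' s, ← h1, hspan]

lemma aux_key_dim (A B C : Submodule 𝔽 U) (hAB : A ⊓ B = ⊥) :
    Module.finrank 𝔽 ↥(A ⊔ B ⊔ C) + Module.finrank 𝔽 ↥((A ⊔ B) ⊓ C)
      = Module.finrank 𝔽 ↥A + Module.finrank 𝔽 ↥B + Module.finrank 𝔽 ↥C := by
  have h1 := Submodule.finrank_sup_add_finrank_inf_eq (A ⊔ B) C
  have h2 := Submodule.finrank_sup_add_finrank_inf_eq A B
  rw [hAB, finrank_bot, add_zero] at h2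
  rw [h1, h2]

/-- Lower bound: every linearly independent set has discoordination at least
`dim ((A ⊔ B) ⊓ C)`. -/
lemma aux_lower (A B C : Submodule 𝔽 U)
    (hAB : A ⊓ B = ⊥) (hAC : A ⊓ C = ⊥) (hBC : B ⊓ C = ⊥)
    (X : Set U) (hX : LinearIndependent 𝔽 (fun x : X => (x : U))) :
    Module.finrank 𝔽 ↥((A ⊔ B) ⊓ C) ≤ disCoordX 𝔽 X ![A, B, C] := by
  set sA := X ∩ (A : Set U) with hsA
  set sB := X ∩ (B : Set U) with hsB
  set sC := X ∩ (C : Set U) with hsC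
  have hzero : (0 : U) ∉ X := fun h0 => hX.ne_zero ⟨0, h0⟩ rfl
  have hdisj : ∀ (P Q : Submodule 𝔽 U), P ⊓ Q = ⊥ →
      Disjoint (X ∩ (P : Set U)) (X ∩ (Q : Set U)) := by
    intro P Q hPQ
    rw [Set.disjoint_left]
    rintro x ⟨hxX, hxP⟩ ⟨-, hxQ⟩
    have : x ∈ P ⊓ Q := ⟨hxP, hxQ⟩
    rw [hPQ, Submodule.mem_bot] at this
    exact hzero (this ▸ hxX)
  have hliA : LinearIndependent 𝔽 ((↑) : sA → U) := LinearIndepOn.mono (v := id) hX Set.inter_subset_left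
  have hliB : LinearIndependent 𝔽 ((↑) : sB → U) := LinearIndepOn.mono (v := id) hX Set.inter_subset_left
  have hliC : LinearIndependent 𝔽 ((↑) : sC → U) := LinearIndepOn.mono (v := id) hX Set.inter_subset_left
  have hfA : sA.Finite := hliA.setFinite
  have hfB : sB.Finite := hliB.setFinite
  have hfC : sC.Finite := hliC.setFinite
  have hnA : sA.ncard ≤ Module.finrank 𝔽 A := aux_ncard_le hliA Set.inter_subset_right
  have hnB : sB.ncard ≤ Module.finrank 𝔽 B := aux_ncard_le hliB Set.inter_subset_right
  have hnC : sC.ncard ≤ Module.finrank 𝔽 C := aux_ncard_le hliC Set.inter_subset_right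
  -- the union bound
  have hUsub : sA ∪ sB ∪ sC ⊆ ((A ⊔ B ⊔ C : Submodule 𝔽 U) : Set U) := by
    rintro x (⟨(⟨-, hx⟩ | ⟨-, hx⟩)⟩ | ⟨-, hx⟩)
    · exact Submodule.mem_sup_left (Submodule.mem_sup_left hx)
    · exact Submodule.mem_sup_left (Submodule.mem_sup_right hx)
    · exact Submodule.mem_sup_right hx
  have hUli : LinearIndependent 𝔽 ((↑) : ↥(sA ∪ sB ∪ sC) → U) := by
    apply LinearIndepOn.mono (v := id) (s := X) (t := sA ∪ sB ∪ sC) hX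
    intro x hx
    rcases hx with (hx | hx) | hx
    exacts [hx.1, hx.1, hx.1]
  have hcard : (sA ∪ sB ∪ sC).ncard = sA.ncard + sB.ncard + sC.ncard := by
    rw [Set.ncard_union_eq ?_ (hfA.union hfB) hfC, Set.ncard_union_eq (hdisj A B hAB) hfA hfB]
    · rw [Set.disjoint_union_left]
      exact ⟨hdisj A C hAC, hdisj B C hBC⟩
  have hsum : sA.ncard + sB.ncard + sC.ncard ≤ Module.finrank 𝔽 ↥(A ⊔ B ⊔ C) := by
    rw [← hcard]; exact aux_ncard_le hUli hUsub
  have hkey := aux_key_dim A B C hAB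
  have hgoal : disCoordX 𝔽 X ![A, B, C]
      = (Module.finrank 𝔽 A - sA.ncard) + (Module.finrank 𝔽 B - sB.ncard)
        + (Module.finrank 𝔽 C - sC.ncard) := by
    simp [disCoordX, Fin.sum_univ_three, Matrix.vecHead, Matrix.vecTail, hsA, hsB, hsC]
    rfl
  rw [hgoal]
  omega

end Aux

/-- If `A ∩ B = A ∩ C = B ∩ C = 0`, then
`dim(A + B) = dim A + dim B` and `DisCoord(A, B, C) = dim((A + B) ∩ C)`. -/
theorem disCoord_of_pairwise_trivial_inter {𝔽 U : Type*} [Field 𝔽] [AddCommGroup U]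
    [Module 𝔽 U] [FiniteDimensional 𝔽 U] (A B C : Submodule 𝔽 U)
    (hAB : A ⊓ B = ⊥) (hAC : A ⊓ C = ⊥) (hBC : B ⊓ C = ⊥) :
    Module.finrank 𝔽 ↥(A ⊔ B) = Module.finrank 𝔽 ↥A + Module.finrank 𝔽 ↥B ∧
    DisCoord 𝔽 ![A, B, C] = Module.finrank 𝔽 ↥((A ⊔ B) ⊓ C) := by
  open Submodule Module Set in
  constructor
  · have h2 := Submodule.finrank_sup_add_finrank_inf_eq A B
    rw [hAB, finrank_bot, add_zero] at h2
    exact h2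
  -- the construction of an optimal X
  set D : Submodule 𝔽 U := (A ⊔ B) ⊓ C with hD
  set d : ℕ := Module.finrank 𝔽 ↥D with hd
  obtain ⟨sA, hsAsub, hliA, hspanA, hcardA⟩ := aux_exists_basis A
  obtain ⟨sB, hsBsub, hliB, hspanB, hcardB⟩ := aux_exists_basis B
  have hDC : D ≤ C := inf_le_right
  obtain ⟨C', hC'⟩ := Submodule.exists_isCompl (D.comap C.subtype)
  set E : Submodule 𝔽 U := C'.map C.subtype with hE
  have hEC : E ≤ C := Submodule.map_subtype_le C C'
  have hED : E ⊓ D = ⊥ := by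
    have h1 : C' ⊓ D.comap C.subtype = ⊥ := disjoint_iff.mp hC'.disjoint.symm
    calc E ⊓ D = C'.map C.subtype ⊓ (D.comap C.subtype).map C.subtype := by
          rw [Submodule.map_comap_subtype, inf_of_le_right hDC]
      _ = (C' ⊓ D.comap C.subtype).map C.subtype :=
          (Submodule.map_inf _ C.injective_subtype).symm
      _ = ⊥ := by rw [h1, Submodule.map_bot]
  have hEsup : E ⊓ (A ⊔ B) = ⊥ := by
    have h1 : E ⊓ (A ⊔ B) ≤ E ⊓ D := by
      apply le_inf inf_le_left
      rw [hD]
      exact le_inf inf_le_right (le_trans inf_le_left hEC)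
    exact le_bot_iff.mp (hED ▸ h1)
  have hEd : Module.finrank 𝔽 ↥E + d = Module.finrank 𝔽 ↥C := by
    have h1 := Submodule.finrank_add_eq_of_isCompl hC'.symm
    have h2 : Module.finrank 𝔽 ↥E = Module.finrank 𝔽 ↥C' :=
      Submodule.finrank_map_subtype_eq C C'
    have h3 : d = Module.finrank 𝔽 ↥(D.comap C.subtype) := by
      rw [hd, ← Submodule.finrank_map_subtype_eq C (D.comap C.subtype),
        Submodule.map_comap_subtype, inf_of_le_right hDC]
    rw [h2, h3, h1]
  obtain ⟨sC, hsCsub, hliC, hspanC, hcardC⟩ := aux_exists_basis E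
  set X : Set U := sA ∪ sB ∪ sC with hX
  -- X is linearly independent
  have hliAB : LinearIndependent 𝔽 ((↑) : ↥(sA ∪ sB) → U) := by
    apply LinearIndepOn.id_union hliA hliB
    rw [hspanA, hspanB, disjoint_iff]
    exact hAB
  have hliX : LinearIndependent 𝔽 ((↑) : ↥X → U) := by
    apply LinearIndepOn.id_union hliAB hliC
    rw [Submodule.span_union, hspanA, hspanB, hspanC, disjoint_comm, disjoint_iff, hEsup]
  -- nonzero-ness facts
  have hA0 : ∀ x ∈ sA, x ≠ 0 := fun x hx => hliA.ne_zero ⟨x, hx⟩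
  have hB0 : ∀ x ∈ sB, x ≠ 0 := fun x hx => hliB.ne_zero ⟨x, hx⟩
  have hC0 : ∀ x ∈ sC, x ≠ 0 := fun x hx => hliC.ne_zero ⟨x, hx⟩
  have hmeet : ∀ (s : Set U) (P Q : Submodule 𝔽 U), s ⊆ ↑P → P ⊓ Q = ⊥ →
      (∀ x ∈ s, x ≠ 0) → ∀ x ∈ s, x ∉ Q := by
    rintro s P Q hsP hPQ hs0 x hxs hxQ
    exact hs0 x hxs (by
      have : x ∈ P ⊓ Q := ⟨hsP hxs, hxQ⟩
      rwa [hPQ, Submodule.mem_bot] at this)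
  have hsCE : ∀ x ∈ sC, x ∉ A ⊔ B := hmeet sC E (A ⊔ B) hsCsub hEsup hC0
  -- intersections
  have hXA : X ∩ (A : Set U) = sA := by
    apply Set.Subset.antisymm
    · rintro x ⟨(hx | hx) | hx, hxA⟩
      · exact hx
      · exact absurd hxA (hmeet sB B A hsBsub (by rw [inf_comm, hAB]) hB0 x hx)
      · exact absurd (Submodule.mem_sup_left hxA) (hsCE x hx)
    · exact fun x hx => ⟨Or.inl (Or.inl hx), hsAsub hx⟩
  have hXB : X ∩ (B : Set U) = sB := by
    apply Set.Subset.antisymm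
    · rintro x ⟨(hx | hx) | hx, hxB⟩
      · exact absurd hxB (hmeet sA A B hsAsub hAB hA0 x hx)
      · exact hx
      · exact absurd (Submodule.mem_sup_right hxB) (hsCE x hx)
    · exact fun x hx => ⟨Or.inl (Or.inr hx), hsBsub hx⟩
  have hXC : X ∩ (C : Set U) = sC := by
    apply Set.Subset.antisymm
    · rintro x ⟨(hx | hx) | hx, hxC⟩
      · exact absurd hxC (hmeet sA A C hsAsub hAC hA0 x hx)
      · exact absurd hxC (hmeet sB B C hsBsub hBC hB0 x hx)
      · exact hx
    · exact fun x hx => ⟨Or.inr hx, hEC (hsCsub hx)⟩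
  have hdis : disCoordX 𝔽 X ![A, B, C] = d := by
    have : disCoordX 𝔽 X ![A, B, C]
        = (Module.finrank 𝔽 A - (X ∩ (A : Set U)).ncard)
          + (Module.finrank 𝔽 B - (X ∩ (B : Set U)).ncard)
          + (Module.finrank 𝔽 C - (X ∩ (C : Set U)).ncard) := by
      simp [disCoordX, Fin.sum_univ_three, Matrix.vecHead, Matrix.vecTail]
      rfl
    rw [this, hXA, hXB, hXC, hcardA, hcardB, hcardC]
    omega
  have hmem : d ∈ { n : ℕ | ∃ Y : Set U, LinearIndependent 𝔽 (fun x : Y => (x : U)) ∧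
      n = disCoordX 𝔽 Y ![A, B, C] } := ⟨X, hliX, hdis.symm⟩
  refine le_antisymm (Nat.sInf_le hmem) (le_csInf ⟨d, hmem⟩ ?_)
  rintro n ⟨Y, hY, rfl⟩
  exact aux_lower A B C hAB hAC hBC Y hY
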